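/- SGD convergence for strongly convex smooth functions: let f: ℝᵈ → ℝ be λ-strongly convex and μ-smooth with minimizer w*. Suppose the SGD iterates satisfy w_{t+1} = w_t - γ_t·ĝ_t with γ_t = 1/(λt), where ĝ_t is an unbiased stochastic subgradient at w_t with E[‖ĝ_t‖₂²] ≤ σ²_{g,t}. Then |E[f(w_T)] - f(w*)| ≤ (2μ/(λ²T²))·Σ_{t=1}^{T} σ²_{g,t}. -/

import Mathlib

open MeasureTheory ProbabilityTheory

lemma euclid_abs_apply_le {d : ℕ} (x : EuclideanSpace ℝ (Fin d)) (i : Fin d) : |x i| ≤ ‖x‖ := by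
  rw [EuclideanSpace.norm_eq]
  have h1 : |x i| = Real.sqrt (‖x i‖ ^ 2) := by
    rw [Real.sqrt_sq_eq_abs, Real.norm_eq_abs, abs_abs]
  rw [h1]
  exact Real.sqrt_le_sqrt (Finset.single_le_sum (fun j _ => sq_nonneg ‖x j‖) (Finset.mem_univ i))

lemma condexp_comp_clm {α E F : Type*} {m m0 : MeasurableSpace α} (hm : m ≤ m0)
    {μ : @Measure α m0} [IsFiniteMeasure μ]
    [NormedAddCommGroup E] [NormedSpace ℝ E] [CompleteSpace E]
    [NormedAddCommGroup F] [NormedSpace ℝ F] [CompleteSpace F]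
    {g : α → E} (hg : Integrable g μ) (T : E →L[ℝ] F) :
    (fun ω => T ((μ[g|m]) ω)) =ᵐ[μ] μ[fun ω => T (g ω)|m] := by
  haveI : SigmaFinite (μ.trim hm) := inferInstance
  refine ae_eq_condExp_of_forall_setIntegral_eq hm (T.integrable_comp hg)
    (fun s _ _ => (T.integrable_comp integrable_condExp).integrableOn)
    (fun s hs _ => ?_) ?_
  · rw [T.integral_comp_comm integrable_condExp.integrableOn,
      setIntegral_condExp hm hg hs, ← T.integral_comp_comm hg.integrableOn]
  · exact (T.continuous.comp_stronglyMeasurable stronglyMeasurable_condExp).aestronglyMeasurable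

lemma integral_inner_condexp {Ω : Type*} {m m0 : MeasurableSpace Ω} (hm : m ≤ m0)
    {μ : @Measure Ω m0} [IsProbabilityMeasure μ] {d : ℕ}
    {g X : Ω → EuclideanSpace ℝ (Fin d)}
    (hgm : Measurable[m0] g) (hXm : StronglyMeasurable[m] X)
    (hg2 : Integrable (fun ω => ‖g ω‖ ^ 2) μ)
    (hX2 : Integrable (fun ω => ‖X ω‖ ^ 2) μ) :
    (∫ ω, (inner ℝ (X ω) (g ω) : ℝ) ∂μ) = (∫ ω, (inner ℝ (X ω) ((μ[g|m]) ω) : ℝ) ∂μ)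
    ∧ Integrable (fun ω => (inner ℝ (X ω) ((μ[g|m]) ω) : ℝ)) μ := by
  haveI : SigmaFinite (μ.trim hm) := inferInstance
  have hXsm : StronglyMeasurable[m0] X := hXm.mono hm
  have hgInt : Integrable g μ := by
    refine ((integrable_const (1:ℝ)).add hg2).mono' hgm.stronglyMeasurable.aestronglyMeasurable ?_
    filter_upwards with ω
    simp only [Pi.add_apply]
    nlinarith [norm_nonneg (g ω)]
  -- coordinate facts
  have hXisM : ∀ i : Fin d, StronglyMeasurable[m] (fun ω => X ω i) := fun i => by
    have := (EuclideanSpace.proj i : EuclideanSpace ℝ (Fin d) →L[ℝ] ℝ).continuous.comp_stronglyMeasurable hXm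
    simpa using this
  have hgi : ∀ i : Fin d, Integrable (fun ω => g ω i) μ := fun i => by
    have := (EuclideanSpace.proj i : EuclideanSpace ℝ (Fin d) →L[ℝ] ℝ).integrable_comp hgInt
    simpa using this
  have hgiM : ∀ i : Fin d, StronglyMeasurable[m0] (fun ω => g ω i) := fun i => by
    have := (EuclideanSpace.proj i : EuclideanSpace ℝ (Fin d) →L[ℝ] ℝ).continuous.comp_stronglyMeasurable
      hgm.stronglyMeasurable
    simpa using this
  have hXi2 : ∀ (Y : Ω → EuclideanSpace ℝ (Fin d)) (i : Fin d) ω, |Y ω i| ≤ ‖Y ω‖ :=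
    fun Y i ω => euclid_abs_apply_le (Y ω) i
  have hprod : ∀ i : Fin d, Integrable (fun ω => X ω i * g ω i) μ := by
    intro i
    refine ((hX2.add hg2).const_mul (1/2)).mono'
      ((((hXisM i).mono hm).mul (hgiM i)).aestronglyMeasurable) ?_
    filter_upwards with ω
    rw [Real.norm_eq_abs, abs_mul]
    simp only [Pi.add_apply]
    nlinarith [hXi2 X i ω, hXi2 g i ω, abs_nonneg (X ω i), abs_nonneg (g ω i),
      norm_nonneg (X ω), norm_nonneg (g ω), sq_nonneg (‖X ω‖ - ‖g ω‖)]
  have hcoord : ∀ i : Fin d, ((μ[fun ω => g ω i|m]) =ᵐ[μ] fun ω => (μ[g|m]) ω i) := by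
    intro i
    have h := condexp_comp_clm hm hgInt (EuclideanSpace.proj i : EuclideanSpace ℝ (Fin d) →L[ℝ] ℝ)
    simpa using h.symm
  have hmulc : ∀ i : Fin d,
      (μ[(fun ω => X ω i) * (fun ω => g ω i)|m]) =ᵐ[μ] (fun ω => X ω i) * μ[fun ω => g ω i|m] :=
    fun i => condExp_mul_of_stronglyMeasurable_left (hXisM i) (hprod i) (hgi i)
  have hchain : ∀ i : Fin d,
      (μ[(fun ω => X ω i) * (fun ω => g ω i)|m]) =ᵐ[μ] fun ω => X ω i * (μ[g|m]) ω i := by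
    intro i
    refine (hmulc i).trans ?_
    filter_upwards [hcoord i] with ω hω
    simp [hω]
  have hprodc : ∀ i : Fin d, Integrable (fun ω => X ω i * (μ[g|m]) ω i) μ :=
    fun i => integrable_condExp.congr (hchain i)
  have hkey : ∀ i : Fin d, (∫ ω, X ω i * g ω i ∂μ) = ∫ ω, X ω i * (μ[g|m]) ω i ∂μ := by
    intro i
    have h1 : (∫ ω, ((fun ω => X ω i) * (fun ω => g ω i)) ω ∂μ)
        = ∫ ω, (μ[(fun ω => X ω i) * (fun ω => g ω i)|m]) ω ∂μ := (integral_condExp hm).symm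
    calc (∫ ω, X ω i * g ω i ∂μ)
        = ∫ ω, (μ[(fun ω => X ω i) * (fun ω => g ω i)|m]) ω ∂μ := h1
      _ = ∫ ω, X ω i * (μ[g|m]) ω i ∂μ := integral_congr_ae (hchain i)
  have hinnerL : ∀ ω, (inner ℝ (X ω) (g ω) : ℝ) = ∑ i, X ω i * g ω i := by
    intro ω; simp [PiLp.inner_apply]; exact Finset.sum_congr rfl fun i _ => mul_comm _ _
  have hinnerR : ∀ ω, (inner ℝ (X ω) ((μ[g|m]) ω) : ℝ) = ∑ i, X ω i * (μ[g|m]) ω i := by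
    intro ω; simp [PiLp.inner_apply]; exact Finset.sum_congr rfl fun i _ => mul_comm _ _
  constructor
  · calc (∫ ω, (inner ℝ (X ω) (g ω) : ℝ) ∂μ) = ∫ ω, ∑ i, X ω i * g ω i ∂μ := by
          simp_rw [hinnerL]
      _ = ∑ i, ∫ ω, X ω i * g ω i ∂μ := integral_finset_sum _ (fun i _ => hprod i)
      _ = ∑ i, ∫ ω, X ω i * (μ[g|m]) ω i ∂μ := by simp_rw [hkey]
      _ = ∫ ω, ∑ i, X ω i * (μ[g|m]) ω i ∂μ := (integral_finset_sum _ (fun i _ => hprodc i)).symm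
      _ = ∫ ω, (inner ℝ (X ω) ((μ[g|m]) ω) : ℝ) ∂μ := by simp_rw [hinnerR]
  · have : Integrable (fun ω => ∑ i, X ω i * (μ[g|m]) ω i) μ :=
      integrable_finset_sum _ (fun i _ => hprodc i)
    exact this.congr (Filter.Eventually.of_forall fun ω => (hinnerR ω).symm)

set_option maxHeartbeats 1000000 in
/-- SGD convergence for strongly convex smooth functions: for f λ-strongly convex
and μ-smooth w.r.t. its minimizer w*, SGD with learning rate γₜ = 1/(λt) and unbiased
stochastic gradients with bounded second moments σ²_{g,t} satisfies
|E[f(w_T)] - f(w*)| ≤ (2μ/(λ²T²)) Σ_{t=1}^{T} σ²_{g,t}. -/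
theorem stmt13 {Ω : Type*} [MeasureSpace Ω]
    (hprob : IsProbabilityMeasure (volume : Measure Ω))
    (d : ℕ) (f : EuclideanSpace ℝ (Fin d) → ℝ) (lam mu : ℝ)
    (hlam : 0 < lam) (hmu : 0 < mu)
    (wstar : EuclideanSpace ℝ (Fin d))
    (hdiff : Differentiable ℝ f)
    (hsc : ∀ w w', f w + (inner ℝ (gradient f w) (w' - w) : ℝ) + lam / 2 * ‖w' - w‖ ^ 2 ≤ f w')
    (hsmooth : ∀ w, f w - f wstar ≤ mu / 2 * ‖w - wstar‖ ^ 2)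
    (hmin : ∀ w, f wstar ≤ f w)
    (T : ℕ) (hT : 0 < T)
    (w : ℕ → Ω → EuclideanSpace ℝ (Fin d)) (ghat : ℕ → Ω → EuclideanSpace ℝ (Fin d))
    (σ : ℕ → ℝ)
    (hmeasw : ∀ t, Measurable (w t))
    (hmeasg : ∀ t, Measurable (ghat t))
    (hupdate : ∀ t, 1 ≤ t → ∀ ω, w (t + 1) ω = w t ω - (1 / (lam * t)) • ghat t ω)
    (hunbiased : ∀ t, (volume : Measure Ω)[ghat t | MeasurableSpace.comap (w t) inferInstance]
      =ᵐ[volume] fun ω => gradient f (w t ω))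
    (hmom : ∀ t, ∫ ω, ‖ghat t ω‖ ^ 2 ≤ σ t ^ 2)
    (hint : ∀ t, Integrable (fun ω => f (w t ω))) :
    |(∫ ω, f (w T ω)) - f wstar| ≤ 2 * mu / (lam ^ 2 * (T : ℝ) ^ 2) * ∑ t ∈ Finset.Icc 1 T, σ t ^ 2 := by
  have hTpos : (0:ℝ) < (T:ℝ) := by exact_mod_cast hT
  -- trivial case d = 0
  rcases Nat.eq_zero_or_pos d with hd | hd
  · subst hd
    have hws : ∀ ω, w T ω = wstar := fun ω => Subsingleton.elim _ _
    have h0 : (∫ ω, f (w T ω)) = f wstar := by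
      simp only [hws, integral_const, measure_univ, probReal_univ, ENNReal.toReal_one, smul_eq_mul, one_mul]
    rw [h0, sub_self, abs_zero]
    have : (0:ℝ) ≤ ∑ t ∈ Finset.Icc 1 T, σ t ^ 2 :=
      Finset.sum_nonneg fun t _ => sq_nonneg _
    positivity
  -- gradient at minimizer vanishes
  have hgradstar : gradient f wstar = 0 := by
    have hloc : IsLocalMin f wstar := Filter.Eventually.of_forall fun x => hmin x
    have hfd := hloc.fderiv_eq_zero
    show (InnerProductSpace.toDual ℝ _).symm (fderiv ℝ f wstar) = 0
    rw [hfd, map_zero]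
  -- lam ≤ mu
  have hlammu : lam ≤ mu := by
    have hne : Nonempty (Fin d) := ⟨⟨0, hd⟩⟩
    obtain ⟨i⟩ := hne
    set v : EuclideanSpace ℝ (Fin d) := EuclideanSpace.single i (1:ℝ) with hv_def
    have hv : ‖v‖ = 1 := by simp [hv_def]
    have h1 : f wstar + lam / 2 * ‖v‖ ^ 2 ≤ f (wstar + v) := by
      have := hsc wstar (wstar + v)
      rw [hgradstar] at this
      simpa using this
    have h2 : f (wstar + v) - f wstar ≤ mu / 2 * ‖v‖ ^ 2 := by
      simpa using hsmooth (wstar + v)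
    rw [hv] at h1 h2
    nlinarith
  -- pointwise strong convexity at wstar
  have hscstar : ∀ x : EuclideanSpace ℝ (Fin d), f wstar + lam / 2 * ‖x - wstar‖ ^ 2 ≤ f x := by
    intro x
    have := hsc wstar x
    rw [hgradstar] at this
    simpa using this
  -- integrability of squared distances
  have hR_int : ∀ t, Integrable (fun ω => ‖w t ω - wstar‖ ^ 2) := by
    intro t
    have hdom : Integrable (fun ω => 2 / lam * (f (w t ω) - f wstar)) :=
      (((hint t).sub (integrable_const (f wstar))).const_mul (2 / lam))
    refine hdom.mono' ?_ ?_
    · exact (((hmeasw t).sub measurable_const).norm.pow_const 2).aestronglyMeasurable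
    · filter_upwards with ω
      rw [Real.norm_eq_abs, abs_of_nonneg (by positivity)]
      have := hscstar (w t ω)
      rw [div_mul_eq_mul_div, le_div_iff₀ hlam]
      nlinarith
  have hR_nonneg : ∀ t, (0:ℝ) ≤ ∫ ω, ‖w t ω - wstar‖ ^ 2 :=
    fun t => integral_nonneg fun ω => sq_nonneg _
  -- integrability of squared gradient estimates
  have hG_int : ∀ t, 1 ≤ t → Integrable (fun ω => ‖ghat t ω‖ ^ 2) := by
    intro t ht
    have htpos : (0:ℝ) < (t:ℝ) := by exact_mod_cast ht
    have hne : lam * (t:ℝ) ≠ 0 := by positivity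
    have h1 : ∀ ω, ghat t ω = (lam * (t:ℝ)) • (w t ω - w (t+1) ω) := by
      intro ω
      rw [hupdate t ht ω, sub_sub_cancel, smul_smul, mul_one_div, div_self hne, one_smul]
    have hdom : Integrable (fun ω => (lam * (t:ℝ))^2 *
        (2 * ‖w t ω - wstar‖ ^ 2 + 2 * ‖w (t+1) ω - wstar‖ ^ 2)) :=
      ((((hR_int t).const_mul 2).add ((hR_int (t+1)).const_mul 2)).const_mul _)
    refine hdom.mono' ((hmeasg t).norm.pow_const 2).aestronglyMeasurable ?_
    filter_upwards with ω
    rw [Real.norm_eq_abs, abs_of_nonneg (by positivity), h1 ω, norm_smul]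
    have hv : ‖w t ω - w (t+1) ω‖ ≤ ‖w t ω - wstar‖ + ‖w (t+1) ω - wstar‖ := by
      have he : w t ω - w (t+1) ω = (w t ω - wstar) - (w (t+1) ω - wstar) := by abel
      rw [he]; exact norm_sub_le _ _
    have h2 : ‖lam * (t:ℝ)‖ = lam * (t:ℝ) := by
      rw [Real.norm_eq_abs, abs_of_pos (by positivity)]
    rw [h2, mul_pow]
    have h3 : (0:ℝ) ≤ (lam * (t:ℝ))^2 := sq_nonneg _
    refine mul_le_mul_of_nonneg_left ?_ h3
    nlinarith [norm_nonneg (w t ω - w (t+1) ω), norm_nonneg (w t ω - wstar),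
      norm_nonneg (w (t+1) ω - wstar), sq_nonneg (‖w t ω - wstar‖ - ‖w (t+1) ω - wstar‖)]
  -- integrability of the inner product terms
  have hip_int : ∀ t, 1 ≤ t →
      Integrable (fun ω => (inner ℝ (w t ω - wstar) (ghat t ω) : ℝ)) := by
    intro t ht
    have hdom : Integrable (fun ω => (1/2 : ℝ) *
        (‖w t ω - wstar‖ ^ 2 + ‖ghat t ω‖ ^ 2)) :=
      ((hR_int t).add (hG_int t ht)).const_mul _
    refine hdom.mono' (((hmeasw t).sub measurable_const).inner (hmeasg t)).aestronglyMeasurable ?_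
    filter_upwards with ω
    rw [Real.norm_eq_abs]
    nlinarith [abs_real_inner_le_norm (w t ω - wstar) (ghat t ω),
      sq_nonneg (‖w t ω - wstar‖ - ‖ghat t ω‖), abs_nonneg (inner ℝ (w t ω - wstar) (ghat t ω) : ℝ),
      norm_nonneg (w t ω - wstar), norm_nonneg (ghat t ω)]
  -- tower property applications
  have htow : ∀ t, 1 ≤ t →
      (∫ ω, (inner ℝ (w t ω - wstar) (ghat t ω) : ℝ))
        = (∫ ω, (inner ℝ (w t ω - wstar) (gradient f (w t ω)) : ℝ))
      ∧ Integrable (fun ω => (inner ℝ (w t ω - wstar) (gradient f (w t ω)) : ℝ)) := by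
    intro t ht
    have hm : MeasurableSpace.comap (w t) inferInstance ≤ _ := (hmeasw t).comap_le
    have hwm : Measurable[MeasurableSpace.comap (w t) inferInstance] (w t) :=
      measurable_iff_comap_le.mpr le_rfl
    have hXm : StronglyMeasurable[MeasurableSpace.comap (w t) inferInstance]
        (fun ω => w t ω - wstar) := (hwm.sub measurable_const).stronglyMeasurable
    obtain ⟨heq, hintc⟩ := integral_inner_condexp hm (hmeasg t) hXm (hG_int t ht) (hR_int t)
    have hcongr : (fun ω => (inner ℝ (w t ω - wstar)
          (((volume : Measure Ω)[ghat t|MeasurableSpace.comap (w t) inferInstance]) ω) : ℝ))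
        =ᵐ[(volume : Measure Ω)] fun ω => (inner ℝ (w t ω - wstar) (gradient f (w t ω)) : ℝ) := by
      filter_upwards [hunbiased t] with ω hω
      rw [hω]
    exact ⟨heq.trans (integral_congr_ae hcongr), hintc.congr hcongr⟩
  -- pointwise strong convexity inner-product lower bound
  have hptwise : ∀ t ω, lam * ‖w t ω - wstar‖ ^ 2
      ≤ (inner ℝ (w t ω - wstar) (gradient f (w t ω)) : ℝ) := by
    intro t ω
    have h2 := hsc (w t ω) wstar
    have h3 := hscstar (w t ω)
    have h4 : (inner ℝ (gradient f (w t ω)) (wstar - w t ω) : ℝ)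
        = -(inner ℝ (w t ω - wstar) (gradient f (w t ω)) : ℝ) := by
      rw [real_inner_comm, show wstar - w t ω = -(w t ω - wstar) by abel, inner_neg_left]
    rw [h4] at h2
    have h5 : ‖wstar - w t ω‖ = ‖w t ω - wstar‖ := norm_sub_rev _ _
    rw [h5] at h2
    nlinarith
  -- the one-step recursion
  have key : ∀ t, 1 ≤ t →
      (∫ ω, ‖w (t+1) ω - wstar‖ ^ 2)
        ≤ (1 - 2 / (t:ℝ)) * (∫ ω, ‖w t ω - wstar‖ ^ 2) + σ t ^ 2 / (lam ^ 2 * (t:ℝ) ^ 2) := by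
    intro t ht
    have htpos : (0:ℝ) < (t:ℝ) := by exact_mod_cast ht
    have hexp : ∀ ω, ‖w (t+1) ω - wstar‖ ^ 2
        = ‖w t ω - wstar‖ ^ 2
          - 2 * (1 / (lam * (t:ℝ))) * (inner ℝ (w t ω - wstar) (ghat t ω) : ℝ)
          + (1 / (lam * (t:ℝ)))^2 * ‖ghat t ω‖ ^ 2 := by
      intro ω
      rw [hupdate t ht ω]
      have he : w t ω - (1 / (lam * (t:ℝ))) • ghat t ω - wstar
          = (w t ω - wstar) - (1 / (lam * (t:ℝ))) • ghat t ω := by abel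
      rw [he, norm_sub_sq_real, real_inner_smul_right, norm_smul]
      have hn : ‖(1 / (lam * (t:ℝ)))‖ = 1 / (lam * (t:ℝ)) := by
        rw [Real.norm_eq_abs, abs_of_pos (by positivity)]
      rw [hn]; ring
    have hsplit : (∫ ω, ‖w (t+1) ω - wstar‖ ^ 2)
        = (∫ ω, ‖w t ω - wstar‖ ^ 2)
          - 2 * (1 / (lam * (t:ℝ))) * (∫ ω, (inner ℝ (w t ω - wstar) (ghat t ω) : ℝ))
          + (1 / (lam * (t:ℝ)))^2 * (∫ ω, ‖ghat t ω‖ ^ 2) := by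
      have iMul : Integrable (fun ω => 2 * (1 / (lam * (t:ℝ)))
          * (inner ℝ (w t ω - wstar) (ghat t ω) : ℝ)) := (hip_int t ht).const_mul _
      have iMul2 : Integrable (fun ω => (1 / (lam * (t:ℝ)))^2 * ‖ghat t ω‖ ^ 2) :=
        (hG_int t ht).const_mul _
      have iSub : Integrable (fun ω => ‖w t ω - wstar‖ ^ 2
          - 2 * (1 / (lam * (t:ℝ))) * (inner ℝ (w t ω - wstar) (ghat t ω) : ℝ)) :=
        (hR_int t).sub iMul
      simp_rw [hexp]
      rw [integral_add iSub iMul2, integral_sub (hR_int t) iMul,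
        integral_const_mul, integral_const_mul]
    have h1 : lam * (∫ ω, ‖w t ω - wstar‖ ^ 2)
        ≤ ∫ ω, (inner ℝ (w t ω - wstar) (ghat t ω) : ℝ) := by
      rw [(htow t ht).1]
      have := integral_mono ((hR_int t).const_mul lam) (htow t ht).2 (fun ω => hptwise t ω)
      rwa [integral_const_mul] at this
    have h2 : (∫ ω, ‖ghat t ω‖ ^ 2) ≤ σ t ^ 2 := hmom t
    rw [hsplit]
    have e1 : (1 / (lam * (t:ℝ)))^2 * (∫ ω, ‖ghat t ω‖ ^ 2)
        ≤ (1 / (lam * (t:ℝ)))^2 * σ t ^ 2 :=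
      mul_le_mul_of_nonneg_left h2 (sq_nonneg _)
    have e2 : 2 * (1 / (lam * (t:ℝ))) * (lam * (∫ ω, ‖w t ω - wstar‖ ^ 2))
        ≤ 2 * (1 / (lam * (t:ℝ))) * (∫ ω, (inner ℝ (w t ω - wstar) (ghat t ω) : ℝ)) :=
      mul_le_mul_of_nonneg_left h1 (by positivity)
    have e3 : 2 * (1 / (lam * (t:ℝ))) * (lam * (∫ ω, ‖w t ω - wstar‖ ^ 2))
        = 2 / (t:ℝ) * (∫ ω, ‖w t ω - wstar‖ ^ 2) := by
      field_simp
    have e4 : (1 / (lam * (t:ℝ)))^2 * σ t ^ 2 = σ t ^ 2 / (lam ^ 2 * (t:ℝ) ^ 2) := by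
      rw [div_pow, one_pow, div_mul_eq_mul_div, one_mul, mul_pow]
    linarith
  -- the induction
  have claim : ∀ t : ℕ, 1 ≤ t →
      (∫ ω, ‖w (t+1) ω - wstar‖ ^ 2)
        ≤ 4 / (lam ^ 2 * ((t:ℝ) + 1) ^ 2) * ∑ s ∈ Finset.Icc 1 t, σ s ^ 2 := by
    intro t
    induction t with
    | zero => omega
    | succ n ih =>
      intro _
      rcases Nat.eq_zero_or_pos n with hn | hn
      · subst hn
        have h := key 1 le_rfl
        have hR1 := hR_nonneg 1
        have hl2 : (0:ℝ) < lam^2 := by positivity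
        have h2 : (∫ ω, ‖w (0+1+1) ω - wstar‖ ^ 2) ≤ σ 1 ^ 2 / lam ^ 2 := by
          have hc : (1 - 2/((1:ℕ):ℝ)) = -1 := by norm_num
          have hd : σ 1 ^ 2 / (lam^2*((1:ℕ):ℝ)^2) = σ 1 ^ 2 / lam^2 := by norm_num
          rw [hc, hd] at h
          have he : (∫ ω, ‖w (0+1+1) ω - wstar‖ ^ 2) = (∫ ω, ‖w (1+1) ω - wstar‖ ^ 2) := by
            norm_num
          rw [he]
          linarith
        have hgoal : 4 / (lam ^ 2 * (((0+1:ℕ):ℝ) + 1) ^ 2) * ∑ s ∈ Finset.Icc 1 (0+1), σ s ^ 2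
            = σ 1 ^ 2 / lam ^ 2 := by
          norm_num
          field_simp
        rw [hgoal]
        exact h2
      · have ih' := ih hn
        have h := key (n+1) (by omega)
        have hl2 : (0:ℝ) < lam^2 := by positivity
        set s : ℝ := (n:ℝ) + 1 with hs_def
        have hs2 : (2:ℝ) ≤ s := by
          have : (1:ℝ) ≤ (n:ℝ) := by exact_mod_cast hn
          simp only [hs_def]; linarith
        have hspos : (0:ℝ) < s := by linarith
        have hA : (0:ℝ) ≤ ∑ x ∈ Finset.Icc 1 n, σ x ^ 2 :=
          Finset.sum_nonneg fun x _ => sq_nonneg _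
        have hB : (0:ℝ) ≤ σ (n+1) ^ 2 := sq_nonneg _
        have hcoef : (0:ℝ) ≤ 1 - 2 / s := by
          rw [sub_nonneg, div_le_one hspos]; exact hs2
        have hpush : (((n+1 : ℕ)):ℝ) = s := by push_cast [hs_def]; ring
        rw [hpush] at h ⊢
        rw [Finset.sum_Icc_succ_top (by omega : 1 ≤ n + 1)]
        have step1 : (∫ ω, ‖w (n+1) ω - wstar‖ ^ 2)
            ≤ 4 / (lam ^ 2 * s ^ 2) * ∑ x ∈ Finset.Icc 1 n, σ x ^ 2 := ih'
        have c1 : (1 - 2/s) * (4/(lam^2*s^2)) ≤ 4/(lam^2*(s+1)^2) := by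
          rw [show (1 - 2/s) * (4/(lam^2*s^2)) = (4*(s-2))/(lam^2*s^3) by field_simp]
          rw [div_le_div_iff₀ (by positivity) (by positivity)]
          have p : (s-2)*(s+1)^2 ≤ s^3 := by nlinarith [hs2, hspos]
          nlinarith [p, hl2, mul_le_mul_of_nonneg_left p hl2.le]
        have c2 : 1/(lam^2*s^2) ≤ 4/(lam^2*(s+1)^2) := by
          rw [div_le_div_iff₀ (by positivity) (by positivity)]
          have q : (s+1)^2 ≤ 4*s^2 := by nlinarith [hs2]
          nlinarith [q, hl2, mul_le_mul_of_nonneg_left q hl2.le]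
        calc (∫ ω, ‖w (n+1+1) ω - wstar‖ ^ 2)
            ≤ (1 - 2/s) * (∫ ω, ‖w (n+1) ω - wstar‖ ^ 2) + σ (n+1)^2/(lam^2*s^2) := h
          _ ≤ (1 - 2/s) * (4/(lam^2*s^2) * ∑ x ∈ Finset.Icc 1 n, σ x ^ 2)
              + σ (n+1)^2/(lam^2*s^2) := by
            have := mul_le_mul_of_nonneg_left step1 hcoef
            linarith
          _ = ((1 - 2/s) * (4/(lam^2*s^2))) * (∑ x ∈ Finset.Icc 1 n, σ x ^ 2)
              + (1/(lam^2*s^2)) * σ (n+1)^2 := by ring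
          _ ≤ (4/(lam^2*(s+1)^2)) * (∑ x ∈ Finset.Icc 1 n, σ x ^ 2)
              + (4/(lam^2*(s+1)^2)) * σ (n+1)^2 :=
            add_le_add (mul_le_mul_of_nonneg_right c1 hA) (mul_le_mul_of_nonneg_right c2 hB)
          _ = 4/(lam^2*(s+1)^2) * ((∑ x ∈ Finset.Icc 1 n, σ x ^ 2) + σ (n+1)^2) := by ring
  -- lower bound on the expectation
  have hlow : f wstar ≤ ∫ ω, f (w T ω) := by
    have := integral_mono (integrable_const (f wstar)) (hint T) (fun ω => hmin (w T ω))
    simpa [measure_univ] using this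
  rw [abs_of_nonneg (by linarith)]
  have hl2 : (0:ℝ) < lam ^ 2 := by positivity
  -- smoothness bound
  have hup : (∫ ω, f (w T ω)) - f wstar ≤ mu / 2 * (∫ ω, ‖w T ω - wstar‖ ^ 2) := by
    have iSub : Integrable (fun ω => f (w T ω) - f wstar) :=
      (hint T).sub (integrable_const (f wstar))
    have iMul : Integrable (fun ω => mu / 2 * ‖w T ω - wstar‖ ^ 2) :=
      (hR_int T).const_mul (mu / 2)
    have hmono := integral_mono iSub iMul (fun ω => hsmooth (w T ω))
    rw [integral_sub (hint T) (integrable_const (f wstar)), integral_const_mul] at hmono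
    simpa [measure_univ] using hmono
  rcases Nat.lt_or_ge T 2 with hT2 | hT2
  · -- T = 1
    have hT1 : T = 1 := by omega
    subst hT1
    -- pointwise bound from strong convexity
    have hpt : ∀ ω, f (w 1 ω) - f wstar
        ≤ (inner ℝ (w 1 ω - wstar) (gradient f (w 1 ω)) : ℝ) - lam/2 * ‖w 1 ω - wstar‖ ^ 2 := by
      intro ω
      have h2 := hsc (w 1 ω) wstar
      have h4 : (inner ℝ (gradient f (w 1 ω)) (wstar - w 1 ω) : ℝ)
          = -(inner ℝ (w 1 ω - wstar) (gradient f (w 1 ω)) : ℝ) := by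
        rw [real_inner_comm, show wstar - w 1 ω = -(w 1 ω - wstar) by abel, inner_neg_left]
      rw [h4, norm_sub_rev] at h2
      linarith
    have hIfint : Integrable (fun ω => (inner ℝ (w 1 ω - wstar) (gradient f (w 1 ω)) : ℝ)
        - lam/2 * ‖w 1 ω - wstar‖ ^ 2) :=
      (htow 1 le_rfl).2.sub ((hR_int 1).const_mul _)
    have iSub1 : Integrable (fun ω => f (w 1 ω) - f wstar) :=
      (hint 1).sub (integrable_const (f wstar))
    have h5 := integral_mono iSub1 hIfint (fun ω => hpt ω)
    rw [integral_sub (hint 1) (integrable_const (f wstar)),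
      integral_sub (htow 1 le_rfl).2 ((hR_int 1).const_mul _), integral_const_mul] at h5
    simp only [integral_const, measure_univ, probReal_univ, ENNReal.toReal_one, smul_eq_mul, one_mul] at h5
    -- bound the inner product integral
    have hptg : ∀ ω, (inner ℝ (w 1 ω - wstar) (ghat 1 ω) : ℝ)
        ≤ 1/(2*lam) * ‖ghat 1 ω‖ ^ 2 + lam/2 * ‖w 1 ω - wstar‖ ^ 2 := by
      intro ω
      have hcs := real_inner_le_norm (w 1 ω - wstar) (ghat 1 ω)
      have hsq := sq_nonneg (lam * ‖w 1 ω - wstar‖ - ‖ghat 1 ω‖)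
      rw [show 1/(2*lam) * ‖ghat 1 ω‖ ^ 2 + lam/2 * ‖w 1 ω - wstar‖ ^ 2
        = (lam^2 * ‖w 1 ω - wstar‖ ^ 2 + ‖ghat 1 ω‖ ^ 2) / (2*lam) by field_simp; ring,
        le_div_iff₀ (by positivity)]
      nlinarith [norm_nonneg (w 1 ω - wstar), norm_nonneg (ghat 1 ω), hlam]
    have iAdd : Integrable (fun ω => 1/(2*lam) * ‖ghat 1 ω‖ ^ 2
        + lam/2 * ‖w 1 ω - wstar‖ ^ 2) :=
      ((hG_int 1 le_rfl).const_mul _).add ((hR_int 1).const_mul _)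
    have h6 := integral_mono (hip_int 1 le_rfl) iAdd (fun ω => hptg ω)
    rw [integral_add ((hG_int 1 le_rfl).const_mul _) ((hR_int 1).const_mul _),
      integral_const_mul, integral_const_mul] at h6
    have h7 : (∫ ω, (inner ℝ (w 1 ω - wstar) (ghat 1 ω) : ℝ))
        = ∫ ω, (inner ℝ (w 1 ω - wstar) (gradient f (w 1 ω)) : ℝ) := (htow 1 le_rfl).1
    have h8 : (∫ ω, ‖ghat 1 ω‖ ^ 2) ≤ σ 1 ^ 2 := hmom 1
    have h9 : (∫ ω, f (w 1 ω)) - f wstar ≤ 1/(2*lam) * σ 1 ^ 2 := by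
      have := mul_le_mul_of_nonneg_left h8 (by positivity : (0:ℝ) ≤ 1/(2*lam))
      linarith
    have h10 : 1/(2*lam) * σ 1 ^ 2 ≤ 2 * mu / (lam^2 * ((1:ℕ):ℝ)^2) * σ 1 ^ 2 := by
      have hc : 1/(2*lam) ≤ 2 * mu / (lam^2 * ((1:ℕ):ℝ)^2) := by
        rw [Nat.cast_one, one_pow, mul_one, div_le_div_iff₀ (by positivity) (by positivity)]
        nlinarith [hlam, hmu, hlammu]
      exact mul_le_mul_of_nonneg_right hc (sq_nonneg _)
    have h11 : ∑ t ∈ Finset.Icc 1 1, σ t ^ 2 = σ 1 ^ 2 := by simp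
    rw [h11]
    linarith
  · -- T ≥ 2
    obtain ⟨t, rfl⟩ : ∃ t, T = t + 1 := ⟨T-1, by omega⟩
    have ht1 : 1 ≤ t := by omega
    have hc := claim t ht1
    have hcast : ((t:ℝ) + 1) = ((t+1 : ℕ) : ℝ) := by push_cast; ring
    rw [hcast] at hc
    have hTc : (0:ℝ) < ((t+1:ℕ):ℝ) := by positivity
    have hsum : ∑ x ∈ Finset.Icc 1 t, σ x ^ 2 ≤ ∑ x ∈ Finset.Icc 1 (t+1), σ x ^ 2 := by
      rw [Finset.sum_Icc_succ_top (by omega : 1 ≤ t + 1)]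
      nlinarith [sq_nonneg (σ (t+1))]
    have hcoef : (0:ℝ) ≤ 4 / (lam^2 * ((t+1:ℕ):ℝ)^2) := by positivity
    calc (∫ ω, f (w (t+1) ω)) - f wstar
        ≤ mu / 2 * (∫ ω, ‖w (t+1) ω - wstar‖ ^ 2) := hup
      _ ≤ mu / 2 * (4 / (lam^2 * ((t+1:ℕ):ℝ)^2) * ∑ x ∈ Finset.Icc 1 t, σ x ^ 2) :=
          mul_le_mul_of_nonneg_left hc (by positivity)
      _ = 2 * mu / (lam^2 * ((t+1:ℕ):ℝ)^2) * ∑ x ∈ Finset.Icc 1 t, σ x ^ 2 := by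
          field_simp
          ring
      _ ≤ 2 * mu / (lam^2 * ((t+1:ℕ):ℝ)^2) * ∑ x ∈ Finset.Icc 1 (t+1), σ x ^ 2 :=
          mul_le_mul_of_nonneg_left hsum (by positivity)
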